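/- arXiv:1409.1462 — 2 statements merged into one kernel-verified Lean document; each statement's English description precedes it below -/
import Mathlib

section
/- Under the error bound property with constants M = f* − d(x^{0,0}) and κ > 0, assume additionally that f* − d(x^{0,0}) ≤ L_d R_d²/2 and that the restart length of Algorithm (R-DFG) satisfies K_c + 1 ≥ 2 e κ. Then the last primal iterate v^p = u(x^{0,p}) converges globally linearly: for all p ≥ 0, ‖v^p − u*‖ ≤ e^{−p} √(L_d R_d²/σ_f), dist_K(G v^p + g) ≤ L_d R_d e^{−p}, and |f(v^p) − f*| ≤ L_d R_d (2 R_d + ‖x^{0,0}‖) e^{−p}. -/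
open scoped RealInnerProductSpace

private lemma proj_vi {E : Type*} [NormedAddCommGroup E] [InnerProductSpace ℝ E]
    {C : Set E} (hC : Convex ℝ C) (P : E → E)
    (hP : ∀ z, P z ∈ C ∧ ∀ w ∈ C, ‖z - P z‖ ≤ ‖z - w‖) :
    ∀ z, ∀ w ∈ C, ⟪z - P z, w - P z⟫ ≤ 0 := by
  intro z w hw
  have h1 := (hP z).1
  have : Nonempty C := ⟨⟨P z, h1⟩⟩
  have heq : ‖z - P z‖ = ⨅ w : C, ‖z - w‖ := by
    apply le_antisymm
    · exact le_ciInf fun w' => (hP z).2 w' w'.2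
    · refine ciInf_le (f := fun w : C => ‖z - (w : E)‖) ?_ ⟨P z, h1⟩
      refine ⟨0, ?_⟩
      rintro r ⟨w', rfl⟩
      exact norm_nonneg _
  exact (norm_eq_iInf_iff_real_inner_le_zero hC h1).mp heq w hw

private lemma key_ineq {E : Type*} [NormedAddCommGroup E] [InnerProductSpace ℝ E]
    {C : Set E} (hC : Convex ℝ C) {dd : E → ℝ} {gr : E → E} {L : ℝ} (hL : 0 < L)
    {P : E → E} (hP : ∀ z, P z ∈ C ∧ ∀ w ∈ C, ‖z - P z‖ ≤ ‖z - w‖)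
    (hconc : ∀ a b, dd b ≤ dd a + ⟪gr a, b - a⟫)
    (hdesc : ∀ a b, dd a + ⟪gr a, b - a⟫ - L/2*‖b - a‖^2 ≤ dd b) :
    ∀ y z, z ∈ C →
      dd z + L/2 * ‖P (y + (1/L) • gr y) - y‖^2 + L * ⟪y - z, P (y + (1/L) • gr y) - y⟫
        ≤ dd (P (y + (1/L) • gr y)) := by
  intro y z hz
  set T := P (y + (1/L) • gr y) with hTdef
  have hvi := proj_vi hC P hP (y + (1/L) • gr y) z hz
  have hgz : ⟪gr y, z - T⟫ ≤ L * ⟪T - y, z - T⟫ := by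
    have expand : (y + (1/L) • gr y) - T = (y - T) + (1/L) • gr y := add_sub_right_comm y _ T
    rw [expand, inner_add_left, real_inner_smul_left] at hvi
    have h2 : ⟪y - T, z - T⟫ = - ⟪T - y, z - T⟫ := by
      rw [show y - T = -(T - y) by abel, inner_neg_left]
    rw [h2] at hvi
    have h3 : (1/L) * ⟪gr y, z - T⟫ ≤ ⟪T - y, z - T⟫ := by linarith
    have h4 := mul_le_mul_of_nonneg_left h3 hL.le
    rw [← mul_assoc, mul_one_div_cancel hL.ne', one_mul] at h4
    exact h4
  have hd1 := hdesc y T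
  have hc1 := hconc y z
  have e1 : ⟪gr y, z - y⟫ = ⟪gr y, z - T⟫ + ⟪gr y, T - y⟫ := by
    rw [← inner_add_right]; congr 1; abel
  have e2 : ⟪T - y, z - T⟫ = ⟪T - y, z - y⟫ - ‖T - y‖^2 := by
    rw [show z - T = (z - y) - (T - y) by abel, inner_sub_right,
      real_inner_self_eq_norm_sq]
  have e3 : ⟪y - z, T - y⟫ = - ⟪T - y, z - y⟫ := by
    rw [show y - z = -(z - y) by abel, inner_neg_left, real_inner_comm]
  nlinarith [hgz, hd1, hc1, e1, e2, e3]

private lemma fista_run {E : Type*} [NormedAddCommGroup E] [InnerProductSpace ℝ E]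
    {C : Set E} {dd : E → ℝ} {gr : E → E} {L : ℝ} (hL : 0 < L)
    {P : E → E} (hP : ∀ z, P z ∈ C ∧ ∀ w ∈ C, ‖z - P z‖ ≤ ‖z - w‖)
    (key : ∀ y z, z ∈ C →
      dd z + L/2 * ‖P (y + (1/L) • gr y) - y‖^2 + L * ⟪y - z, P (y + (1/L) • gr y) - y⟫
        ≤ dd (P (y + (1/L) • gr y)))
    {θ : ℕ → ℝ} (hθ1 : θ 1 = 1) (hθge : ∀ k, 1 ≤ k → 1 ≤ θ k)
    (hθsq : ∀ k, 1 ≤ k → θ (k+1)^2 - θ (k+1) = θ k ^ 2)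
    {x y : ℕ → E} (hy1 : y 1 = x 0)
    (hx : ∀ k, 1 ≤ k → x k = P (y k + (1/L) • gr (y k)))
    (hy : ∀ k, 1 ≤ k → y (k+1) = x k + ((θ k - 1)/θ (k+1)) • (x k - x (k-1)))
    {w : E} (hw : w ∈ C) (hmaxw : ∀ z ∈ C, dd z ≤ dd w) :
    (∀ k, 1 ≤ k →
      θ k^2 * (dd w - dd (x k)) + L/2 * ‖θ k • x k - (θ k - 1) • x (k-1) - w‖^2
        ≤ L/2 * ‖x 0 - w‖^2)
    ∧ ∀ k, ‖x k - w‖ ≤ ‖x 0 - w‖ := by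
  have hxC : ∀ k, 1 ≤ k → x k ∈ C := by
    intro k hk; rw [hx k hk]; exact (hP _).1
  -- base case
  have base : θ 1^2 * (dd w - dd (x 1)) + L/2 * ‖θ 1 • x 1 - (θ 1 - 1) • x 0 - w‖^2
      ≤ L/2 * ‖x 0 - w‖^2 := by
    have k1 := key (y 1) w hw
    rw [← hx 1 le_rfl, hy1] at k1
    have nid : ‖x 1 - w‖^2 = ‖x 1 - x 0‖^2 + 2*⟪x 1 - x 0, x 0 - w⟫ + ‖x 0 - w‖^2 := by
      rw [show x 1 - w = (x 1 - x 0) + (x 0 - w) by abel, norm_add_sq_real]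
    have nid2 : L/2 * ‖x 1 - w‖^2
        = L/2 * (‖x 1 - x 0‖^2 + 2*⟪x 1 - x 0, x 0 - w⟫ + ‖x 0 - w‖^2) := by rw [nid]
    have comm : L * ⟪x 0 - w, x 1 - x 0⟫ = L * ⟪x 1 - x 0, x 0 - w⟫ := by
      rw [real_inner_comm]
    simp only [hθ1, one_pow, one_smul, sub_self, zero_smul, sub_zero, one_mul]
    linarith
  -- monotone step
  have step : ∀ k, 1 ≤ k →
      θ (k+1)^2 * (dd w - dd (x (k+1)))
        + L/2 * ‖θ (k+1) • x (k+1) - (θ (k+1) - 1) • x k - w‖^2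
      ≤ θ k^2 * (dd w - dd (x k)) + L/2 * ‖θ k • x k - (θ k - 1) • x (k-1) - w‖^2 := by
    intro k hk
    have ha1 : 1 ≤ θ (k+1) := hθge (k+1) (by omega)
    have ha0 : (0:ℝ) < θ (k+1) := by linarith
    have hyk := hy k hk
    have k1 := key (y (k+1)) (x k) (hxC k hk)
    have k2 := key (y (k+1)) w hw
    rw [← hx (k+1) (by omega)] at k1 k2
    set t := x (k+1) - y (k+1) with ht
    set u := θ k • x k - (θ k - 1) • x (k-1) - w with hu
    have hid1 : (θ (k+1) - 1) • (y (k+1) - x k) + (y (k+1) - w) = u := by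
      rw [hu, hyk]
      match_scalars <;> field_simp <;> ring
    have hid2 : u + θ (k+1) • t = θ (k+1) • x (k+1) - (θ (k+1) - 1) • x k - w := by
      rw [hu, ht, hyk]
      match_scalars <;> field_simp <;> ring
    have hsum : (θ (k+1) - 1) * ⟪y (k+1) - x k, t⟫ + ⟪y (k+1) - w, t⟫ = ⟪u, t⟫ := by
      rw [← hid1, inner_add_left, real_inner_smul_left]
    have hnorm : ‖θ (k+1) • x (k+1) - (θ (k+1) - 1) • x k - w‖^2
        = ‖u‖^2 + 2*(θ (k+1) * ⟪u, t⟫) + θ (k+1)^2 * ‖t‖^2 := by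
      rw [← hid2, norm_add_sq_real, real_inner_smul_right, norm_smul,
        Real.norm_eq_abs, mul_pow, sq_abs]
    have hsq := hθsq k hk
    have i1 : dd w - dd (x (k+1))
        ≤ (dd w - dd (x k)) - L/2*‖t‖^2 - L*⟪y (k+1) - x k, t⟫ := by linarith
    have i2 : dd w - dd (x (k+1)) ≤ - (L/2*‖t‖^2) - L*⟪y (k+1) - w, t⟫ := by linarith
    have c1 : (θ (k+1)*(θ (k+1)-1)) * (dd w - dd (x (k+1)))
        ≤ (θ (k+1)*(θ (k+1)-1)) * ((dd w - dd (x k)) - L/2*‖t‖^2 - L*⟪y (k+1) - x k, t⟫) :=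
      mul_le_mul_of_nonneg_left i1 (by nlinarith)
    have c2 : θ (k+1) * (dd w - dd (x (k+1)))
        ≤ θ (k+1) * (- (L/2*‖t‖^2) - L*⟪y (k+1) - w, t⟫) :=
      mul_le_mul_of_nonneg_left i2 (by linarith)
    have c3 : L*θ (k+1)*((θ (k+1) - 1) * ⟪y (k+1) - x k, t⟫ + ⟪y (k+1) - w, t⟫)
        = L*θ (k+1)*⟪u, t⟫ := by rw [hsum]
    have c4 : (θ (k+1)^2 - θ (k+1)) * (dd w - dd (x k))
        = θ k^2 * (dd w - dd (x k)) := by rw [hsq]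
    have c5 : L/2 * ‖θ (k+1) • x (k+1) - (θ (k+1) - 1) • x k - w‖^2
        = L/2 * (‖u‖^2 + 2*(θ (k+1) * ⟪u, t⟫) + θ (k+1)^2 * ‖t‖^2) := by rw [hnorm]
    linarith
  -- part 1 by induction
  have part1 : ∀ k, 1 ≤ k →
      θ k^2 * (dd w - dd (x k)) + L/2 * ‖θ k • x k - (θ k - 1) • x (k-1) - w‖^2
        ≤ L/2 * ‖x 0 - w‖^2 := by
    intro k hk
    induction k, hk using Nat.le_induction with
    | base => exact base
    | succ k hk ih => exact le_trans (step k hk) ih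
  refine ⟨part1, ?_⟩
  have hubd : ∀ k, 1 ≤ k → ‖θ k • x k - (θ k - 1) • x (k-1) - w‖ ≤ ‖x 0 - w‖ := by
    intro k hk
    have h1 := part1 k hk
    have h2 : 0 ≤ θ k^2 * (dd w - dd (x k)) := by
      have h2a := hmaxw (x k) (hxC k hk)
      have h2b : 0 ≤ dd w - dd (x k) := by linarith
      positivity
    have h3 : ‖θ k • x k - (θ k - 1) • x (k-1) - w‖^2 ≤ ‖x 0 - w‖^2 := by nlinarith
    exact (abs_le_of_sq_le_sq' h3 (norm_nonneg _)).2
  intro k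
  induction k with
  | zero => exact le_rfl
  | succ k ih =>
    have hk1 : (1:ℕ) ≤ k + 1 := by omega
    have ha1 : 1 ≤ θ (k+1) := hθge (k+1) hk1
    have ha0 : (0:ℝ) < θ (k+1) := by linarith
    have hu := hubd (k+1) hk1
    have hdec : x (k+1) - w = (1/θ (k+1)) • (θ (k+1) • x (k+1) - (θ (k+1) - 1) • x ((k+1)-1) - w)
        + ((θ (k+1) - 1)/θ (k+1)) • (x k - w) := by
      simp only [Nat.add_sub_cancel]
      match_scalars <;> field_simp <;> ring
    calc ‖x (k+1) - w‖
        ≤ (1/θ (k+1)) * ‖θ (k+1) • x (k+1) - (θ (k+1) - 1) • x ((k+1)-1) - w‖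
          + ((θ (k+1) - 1)/θ (k+1)) * ‖x k - w‖ := by
          rw [hdec]
          refine le_trans (norm_add_le _ _) ?_
          rw [norm_smul, norm_smul, Real.norm_eq_abs, Real.norm_eq_abs,
            abs_of_nonneg (by positivity),
            abs_of_nonneg (div_nonneg (by linarith) (by linarith))]
      _ ≤ (1/θ (k+1)) * ‖x 0 - w‖ + ((θ (k+1) - 1)/θ (k+1)) * ‖x 0 - w‖ := by
          gcongr
      _ = ‖x 0 - w‖ := by field_simp; ring

private lemma theta_facts {θ : ℕ → ℝ} (hθ1 : θ 1 = 1)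
    (hθrec : ∀ k, 1 ≤ k → θ (k + 1) = (1 + Real.sqrt (1 + 4 * θ k ^ 2)) / 2) :
    (∀ k, 1 ≤ k → 1 ≤ θ k) ∧ (∀ k, 1 ≤ k → θ (k+1)^2 - θ (k+1) = θ k ^ 2) ∧
    (∀ k : ℕ, 1 ≤ k → ((k:ℝ)+1)/2 ≤ θ k) := by
  have hge : ∀ k, 1 ≤ k → 1 ≤ θ k := by
    intro k hk
    induction k, hk using Nat.le_induction with
    | base => rw [hθ1]
    | succ k hk ih =>
      rw [hθrec k hk]
      have h1 : (1:ℝ) ≤ 1 + 4 * θ k ^ 2 := by nlinarith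
      have h2 : Real.sqrt 1 ≤ Real.sqrt (1 + 4 * θ k ^ 2) := Real.sqrt_le_sqrt h1
      rw [Real.sqrt_one] at h2
      linarith
  refine ⟨hge, ?_, ?_⟩
  · intro k hk
    have hs : Real.sqrt (1 + 4 * θ k ^ 2) ^ 2 = 1 + 4 * θ k ^ 2 :=
      Real.sq_sqrt (by positivity)
    rw [hθrec k hk]
    linear_combination hs / 4
  · intro k hk
    induction k, hk using Nat.le_induction with
    | base => rw [hθ1]; norm_num
    | succ k hk ih =>
      have hθk0 : (0:ℝ) ≤ θ k := by linarith [hge k hk]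
      have h1 : 2 * θ k = Real.sqrt ((2 * θ k)^2) := (Real.sqrt_sq (by linarith)).symm
      have h2 : Real.sqrt ((2 * θ k)^2) ≤ Real.sqrt (1 + 4 * θ k ^ 2) := by
        apply Real.sqrt_le_sqrt; nlinarith
      rw [hθrec k hk]
      push_cast
      nlinarith [h1, h2, ih]

private lemma sc_min {n : ℕ} {f : EuclideanSpace ℝ (Fin n) → ℝ} {σf : ℝ}
    (hfsc : StrongConvexOn Set.univ σf f) {U : Set (EuclideanSpace ℝ (Fin n))}
    (hUcv : Convex ℝ U) {lin : EuclideanSpace ℝ (Fin n) → ℝ}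
    (hlin : ∀ a b : EuclideanSpace ℝ (Fin n), ∀ s t : ℝ, s + t = 1 →
      lin (s • a + t • b) = s * lin a + t * lin b)
    {m : EuclideanSpace ℝ (Fin n)} (hm : m ∈ U)
    (hmin : ∀ u ∈ U, f m + lin m ≤ f u + lin u)
    {u : EuclideanSpace ℝ (Fin n)} (hu : u ∈ U) :
    f m + lin m + σf/2 * ‖u - m‖^2 ≤ f u + lin u := by
  have hA0 : 0 ≤ σf/2 * ‖u - m‖^2 ∨ σf/2 * ‖u - m‖^2 < 0 := le_or_gt _ _
  have claim : ∀ t : ℝ, 0 < t → t < 1 →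
      (1-t) * (σf/2 * ‖u - m‖^2) ≤ (f u + lin u) - (f m + lin m) := by
    intro t ht0 ht1
    have hs0 : (0:ℝ) ≤ 1 - t := by linarith
    have hz : (1-t) • m + t • u ∈ U := hUcv hm hu hs0 ht0.le (by ring)
    have hcv := hfsc.2 (Set.mem_univ m) (Set.mem_univ u) hs0 ht0.le (by ring)
    simp only [smul_eq_mul] at hcv
    have hmz := hmin _ hz
    have hlz := hlin m u (1-t) t (by ring)
    have hnorm : ‖m - u‖ = ‖u - m‖ := norm_sub_rev _ _
    rw [hlz] at hmz
    rw [hnorm] at hcv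
    have ht' : t * ((1-t) * (σf/2 * ‖u - m‖^2)) ≤ t * ((f u + lin u) - (f m + lin m)) := by
      nlinarith
    exact le_of_mul_le_mul_left ht' ht0
  rcases hA0 with hAnn | hAnn
  · have key : σf/2 * ‖u - m‖^2 ≤ (f u + lin u) - (f m + lin m) := by
      apply le_of_forall_pos_le_add
      intro ε hε
      set A : ℝ := σf/2 * ‖u - m‖^2 with hA
      have htpos : 0 < min (1/2) (ε/(A+1)) := lt_min (by norm_num) (by positivity)
      have htlt : min (1/2) (ε/(A+1)) < 1 := lt_of_le_of_lt (min_le_left _ _) (by norm_num)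
      have hc := claim _ htpos htlt
      have htle : min (1/2) (ε/(A+1)) ≤ ε/(A+1) := min_le_right _ _
      have hmain : min (1/2) (ε/(A+1)) * A ≤ ε := by
        have h1 : min (1/2) (ε/(A+1)) * A ≤ (ε/(A+1)) * A :=
          mul_le_mul_of_nonneg_right htle hAnn
        have h2 : (ε/(A+1)) * A ≤ ε := by
          rw [div_mul_eq_mul_div, div_le_iff₀ (by linarith)]
          nlinarith
        linarith
      linarith
    linarith
  · have hc := claim (1/2) (by norm_num) (by norm_num)
    nlinarith [hc]

set_option maxHeartbeats 4000000 in
theorem stmt_17 {n p : ℕ}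
    (f : EuclideanSpace ℝ (Fin n) → ℝ) (σf : ℝ) (hσf : 0 < σf)
    (hfc : Continuous f) (hfsc : StrongConvexOn Set.univ σf f)
    (U : Set (EuclideanSpace ℝ (Fin n))) (hUne : U.Nonempty) (hUcl : IsClosed U) (hUcv : Convex ℝ U)
    (G : EuclideanSpace ℝ (Fin n) →L[ℝ] EuclideanSpace ℝ (Fin p)) (hG : G ≠ 0) (g : EuclideanSpace ℝ (Fin p))
    (K : Set (EuclideanSpace ℝ (Fin p))) (hKne : K.Nonempty) (hKcl : IsClosed K) (hKcv : Convex ℝ K)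
    (hKcone : ∀ c : ℝ, 0 ≤ c → ∀ v ∈ K, c • v ∈ K)
    (Kstar : Set (EuclideanSpace ℝ (Fin p)))
    (hKstar : Kstar = {x : EuclideanSpace ℝ (Fin p) | ∀ v ∈ K, 0 ≤ ⟪x, v⟫})
    (Lag : EuclideanSpace ℝ (Fin n) → EuclideanSpace ℝ (Fin p) → ℝ)
    (hLag : ∀ u x, Lag u x = f u + ⟪x, -(G u) - g⟫)
    (uu : EuclideanSpace ℝ (Fin p) → EuclideanSpace ℝ (Fin n))
    (huu : ∀ x : EuclideanSpace ℝ (Fin p), uu x ∈ U ∧ ∀ u ∈ U, Lag (uu x) x ≤ Lag u x)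
    (d : EuclideanSpace ℝ (Fin p) → ℝ) (hd : ∀ x, d x = Lag (uu x) x)
    (ustar : EuclideanSpace ℝ (Fin n))
    (hustar : ustar ∈ U ∧ G ustar + g ∈ K ∧ ∀ u ∈ U, G u + g ∈ K → f ustar ≤ f u)
    (fstar : ℝ) (hfstar : fstar = f ustar)
    (Xstar : Set (EuclideanSpace ℝ (Fin p))) (hXstar : Xstar = {x ∈ Kstar | d x = fstar})
    (hXne : Xstar.Nonempty)
    (Ld : ℝ) (hLd : Ld = ‖G‖ ^ 2 / σf)
    (projKs : EuclideanSpace ℝ (Fin p) → EuclideanSpace ℝ (Fin p))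
    (hprojKs : ∀ z : EuclideanSpace ℝ (Fin p), projKs z ∈ Kstar ∧ ∀ w ∈ Kstar, ‖z - projKs z‖ ≤ ‖z - w‖)
    (projX : EuclideanSpace ℝ (Fin p) → EuclideanSpace ℝ (Fin p))
    (hprojX : ∀ z : EuclideanSpace ℝ (Fin p), projX z ∈ Xstar ∧ ∀ w ∈ Xstar, ‖z - projX z‖ ≤ ‖z - w‖)
    (θ : ℕ → ℝ) (hθ0 : θ 0 = 0) (hθ1 : θ 1 = 1)
    (hθrec : ∀ k, 1 ≤ k → θ (k + 1) = (1 + Real.sqrt (1 + 4 * θ k ^ 2)) / 2)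
    (Kc : ℕ) (X Y : ℕ → ℕ → EuclideanSpace ℝ (Fin p)) (hX00 : X 0 0 ∈ Kstar)
    (hYinit : ∀ j, Y j 1 = X j 0)
    (hXrec : ∀ j k, 1 ≤ k →
      X j k = projKs (Y j k + (1 / Ld) • (-(G (uu (Y j k))) - g)))
    (hYrec : ∀ j k, 1 ≤ k →
      Y j (k + 1) = X j k + ((θ k - 1) / θ (k + 1)) • (X j k - X j (k - 1)))
    (hrestart : ∀ j, X (j + 1) 0 = X j Kc)
    (xstar : EuclideanSpace ℝ (Fin p)) (hxstar : xstar ∈ Xstar)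
    (hxstarmin : ∀ z ∈ Xstar, ‖X 0 0 - xstar‖ ≤ ‖X 0 0 - z‖)
    (Rd : ℝ) (hRd : Rd = ‖X 0 0 - xstar‖)
    (κ : ℝ) (hκ : 0 < κ) (hMpos : 0 < fstar - d (X 0 0))
    (hEB : ∀ z ∈ Kstar, fstar - d z ≤ fstar - d (X 0 0) →
      ‖z - projX z‖ ≤ κ * ‖projKs (z + (1 / Ld) • (-(G (uu z)) - g)) - z‖)
    (hinit : fstar - d (X 0 0) ≤ Ld * Rd ^ 2 / 2)
    (hKc : 2 * Real.exp 1 * κ ≤ (Kc : ℝ) + 1) :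
    ∀ q : ℕ,
      ‖uu (X q 0) - ustar‖ ≤ Real.exp (-(q : ℝ)) * Real.sqrt (Ld * Rd ^ 2 / σf) ∧
      Metric.infDist (G (uu (X q 0)) + g) K ≤ Ld * Rd * Real.exp (-(q : ℝ)) ∧
      |f (uu (X q 0)) - fstar| ≤
        Ld * Rd * (2 * Rd + ‖X 0 0‖) * Real.exp (-(q : ℝ)) := by
  classical
  -- basic positivity
  have hGn : (0:ℝ) < ‖G‖ := by rwa [norm_pos_iff]
  have hLdpos : 0 < Ld := by rw [hLd]; positivity
  have hRd0 : 0 ≤ Rd := hRd ▸ norm_nonneg _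
  -- Kstar is convex
  have hKscv : Convex ℝ Kstar := by
    rw [hKstar]
    intro x hx y hy a b ha hb hab
    intro v hv
    have h1 := hx v hv
    have h2 := hy v hv
    rw [inner_add_left, real_inner_smul_left, real_inner_smul_left]
    exact add_nonneg (mul_nonneg ha h1) (mul_nonneg hb h2)
  -- affine combination of the linear part of the Lagrangian
  have hlinaff : ∀ x : EuclideanSpace ℝ (Fin p), ∀ a b : EuclideanSpace ℝ (Fin n),
      ∀ s t : ℝ, s + t = 1 →
      ⟪x, -(G (s • a + t • b)) - g⟫ = s * ⟪x, -(G a) - g⟫ + t * ⟪x, -(G b) - g⟫ := by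
    intro x a b s t hst
    have hv : -(G (s • a + t • b)) - g = s • (-(G a) - g) + t • (-(G b) - g) := by
      rw [map_add, map_smul, map_smul]
      match_scalars <;> linarith
    rw [hv, inner_add_right, real_inner_smul_right, real_inner_smul_right]
  -- strong convexity minimizer inequality for the Lagrangian
  have hscmin : ∀ x : EuclideanSpace ℝ (Fin p), ∀ u ∈ U,
      Lag (uu x) x + σf/2 * ‖u - uu x‖^2 ≤ Lag u x := by
    intro x u hu
    have hmin : ∀ u' ∈ U, f (uu x) + ⟪x, -(G (uu x)) - g⟫ ≤ f u' + ⟪x, -(G u') - g⟫ := by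
      intro u' hu'
      rw [← hLag, ← hLag]
      exact (huu x).2 u' hu'
    have := sc_min hfsc hUcv (lin := fun w => ⟪x, -(G w) - g⟫)
      (fun a b s t hst => hlinaff x a b s t hst) (huu x).1 hmin hu
    rw [hLag, hLag]
    exact this
  -- concavity upper bound
  have hconc : ∀ a b : EuclideanSpace ℝ (Fin p),
      d b ≤ d a + ⟪-(G (uu a)) - g, b - a⟫ := by
    intro a b
    have h1 : d b ≤ Lag (uu a) b := by rw [hd]; exact (huu b).2 (uu a) (huu a).1
    have h2 : Lag (uu a) b = d a + ⟪b - a, -(G (uu a)) - g⟫ := by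
      rw [hd, hLag, hLag, inner_sub_left]; ring
    have h3 : ⟪-(G (uu a)) - g, b - a⟫ = ⟪b - a, -(G (uu a)) - g⟫ := real_inner_comm _ _
    linarith
  -- descent (smoothness) lower bound
  have hdesc : ∀ a b : EuclideanSpace ℝ (Fin p),
      d a + ⟪-(G (uu a)) - g, b - a⟫ - Ld/2 * ‖b - a‖^2 ≤ d b := by
    intro a b
    have e1 : d b = Lag (uu b) a + ⟪b - a, -(G (uu b)) - g⟫ := by
      rw [hd, hLag, hLag, inner_sub_left]; ring
    have e2 : d a + σf/2 * ‖uu b - uu a‖^2 ≤ Lag (uu b) a := by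
      have := hscmin a (uu b) (huu b).1
      rw [hd]; linarith
    have e3 : ⟪b - a, -(G (uu b)) - g⟫
        = ⟪b - a, -(G (uu a)) - g⟫ + ⟪b - a, G (uu a) - G (uu b)⟫ := by
      rw [← inner_add_right]; congr 1; abel
    have e4 : -(‖b - a‖ * (‖G‖ * ‖uu b - uu a‖)) ≤ ⟪b - a, G (uu a) - G (uu b)⟫ := by
      have h5 : ⟪-(b - a), G (uu a) - G (uu b)⟫ ≤ ‖-(b - a)‖ * ‖G (uu a) - G (uu b)‖ :=
        real_inner_le_norm _ _
      rw [inner_neg_left, norm_neg] at h5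
      have h6 : ‖G (uu a) - G (uu b)‖ ≤ ‖G‖ * ‖uu b - uu a‖ := by
        rw [← map_sub, ← norm_neg]
        have : -(G (uu a - uu b)) = G (uu b - uu a) := by rw [← map_neg]; congr 1; abel
        rw [this]
        exact G.le_opNorm _
      nlinarith [norm_nonneg (b - a), norm_nonneg (G (uu a) - G (uu b))]
    have e5 : ⟪-(G (uu a)) - g, b - a⟫ = ⟪b - a, -(G (uu a)) - g⟫ := real_inner_comm _ _
    have e6 : -(Ld/2 * ‖b - a‖^2)
        ≤ σf/2 * ‖uu b - uu a‖^2 - ‖b - a‖ * (‖G‖ * ‖uu b - uu a‖) := by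
      have hLσ : Ld * σf = ‖G‖^2 := by rw [hLd]; field_simp
      nlinarith [sq_nonneg (σf * ‖uu b - uu a‖ - ‖G‖ * ‖b - a‖), hσf, sq_nonneg ‖b - a‖]
    linarith
  -- key prox-gradient inequality, specialized
  have key' : ∀ y z : EuclideanSpace ℝ (Fin p), z ∈ Kstar →
      d z + Ld/2 * ‖projKs (y + (1/Ld) • (-(G (uu y)) - g)) - y‖^2
        + Ld * ⟪y - z, projKs (y + (1/Ld) • (-(G (uu y)) - g)) - y⟫
      ≤ d (projKs (y + (1/Ld) • (-(G (uu y)) - g))) :=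
    key_ineq (gr := fun z => -(G (uu z)) - g) hKscv hLdpos hprojKs hconc hdesc
  -- weak duality and related facts
  have hKsInner : ∀ z ∈ Kstar, 0 ≤ ⟪z, G ustar + g⟫ := by
    intro z hz
    rw [hKstar] at hz
    exact hz _ hustar.2.1
  have hLagu : ∀ z : EuclideanSpace ℝ (Fin p), Lag ustar z = fstar - ⟪z, G ustar + g⟫ := by
    intro z
    rw [hLag, hfstar]
    have hv : -(G ustar) - g = -(G ustar + g) := by abel
    rw [hv, inner_neg_right]
    ring
  have hdub : ∀ z : EuclideanSpace ℝ (Fin p), d z ≤ fstar - ⟪z, G ustar + g⟫ := by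
    intro z
    rw [← hLagu, hd]
    exact (huu z).2 ustar hustar.1
  have hwd : ∀ z ∈ Kstar, d z ≤ fstar := by
    intro z hz
    have := hdub z
    have := hKsInner z hz
    linarith
  -- strong convexity bound on primal iterates
  have hsc2 : ∀ z ∈ Kstar, σf/2 * ‖uu z - ustar‖^2 ≤ fstar - d z := by
    intro z hz
    have h1 := hscmin z ustar hustar.1
    rw [norm_sub_rev ustar (uu z)] at h1
    have h2 := hLagu z
    have h3 := hKsInner z hz
    have h4 : d z = Lag (uu z) z := hd z
    linarith
  -- Xstar facts
  have hXsub : Xstar ⊆ Kstar := by rw [hXstar]; intro z hz; exact hz.1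
  have hXd : ∀ z ∈ Xstar, d z = fstar := by
    intro z hz; rw [hXstar] at hz; exact hz.2
  have hmaxX : ∀ w ∈ Xstar, ∀ z ∈ Kstar, d z ≤ d w := by
    intro w hw z hz
    rw [hXd w hw]
    exact hwd z hz
  -- gradient mapping bound
  have hT_mem : ∀ z, projKs z ∈ Kstar := fun z => (hprojKs z).1
  have hgm : ∀ z ∈ Kstar,
      Ld/2 * ‖projKs (z + (1/Ld) • (-(G (uu z)) - g)) - z‖^2 ≤ fstar - d z := by
    intro z hz
    have h1 := key' z z hz
    simp only [sub_self, inner_zero_left, mul_zero, add_zero] at h1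
    have h2 := hwd _ (hT_mem (z + (1/Ld) • (-(G (uu z)) - g)))
    linarith
  -- θ facts
  obtain ⟨hθge, hθsq, hθlb⟩ := theta_facts hθ1 hθrec
  -- case split on κ
  by_cases hκhalf : κ < 1/2
  · -- in this case the hypotheses are contradictory
    exfalso
    have hw0X : projX (X 0 0) ∈ Xstar := (hprojX _).1
    have hEB0 := hEB (X 0 0) hX00 le_rfl
    have hk := key' (X 0 0) (projX (X 0 0)) (hXsub hw0X)
    set t := projKs (X 0 0 + (1/Ld) • (-(G (uu (X 0 0))) - g)) - X 0 0 with htdef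
    have hdT := hwd _ (hT_mem (X 0 0 + (1/Ld) • (-(G (uu (X 0 0))) - g)))
    have hdw0 : d (projX (X 0 0)) = fstar := hXd _ hw0X
    rw [hdw0] at hk
    have h1 : Ld/2 * ‖t‖^2 + Ld * ⟪X 0 0 - projX (X 0 0), t⟫ ≤ 0 := by linarith
    have h2 : -⟪X 0 0 - projX (X 0 0), t⟫ ≤ ‖X 0 0 - projX (X 0 0)‖ * ‖t‖ := by
      have := real_inner_le_norm (-(X 0 0 - projX (X 0 0))) t
      rwa [inner_neg_left, norm_neg] at this
    have h3 : ‖X 0 0 - projX (X 0 0)‖ ≤ κ * ‖t‖ := hEB0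
    have h4 : (0:ℝ) ≤ ‖t‖ := norm_nonneg _
    have h6 : Ld * (-⟪X 0 0 - projX (X 0 0), t⟫)
        ≤ Ld * (‖X 0 0 - projX (X 0 0)‖ * ‖t‖) := mul_le_mul_of_nonneg_left h2 hLdpos.le
    have h7 : ‖X 0 0 - projX (X 0 0)‖ * ‖t‖ ≤ (κ * ‖t‖) * ‖t‖ :=
      mul_le_mul_of_nonneg_right h3 h4
    have h8 : Ld * (‖X 0 0 - projX (X 0 0)‖ * ‖t‖) ≤ Ld * ((κ * ‖t‖) * ‖t‖) :=
      mul_le_mul_of_nonneg_left h7 hLdpos.le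
    have h9 : Ld/2 * ‖t‖^2 ≤ Ld * ((κ * ‖t‖) * ‖t‖) := by nlinarith
    have hpos : 0 < Ld * (1/2 - κ) := by nlinarith
    have h11 : ‖t‖^2 ≤ 0 := by nlinarith
    have h12 : ‖t‖ = 0 := by nlinarith [sq_nonneg ‖t‖, norm_nonneg t]
    have h13 : ‖X 0 0 - projX (X 0 0)‖ ≤ 0 := by
      rw [h12] at h3; linarith
    have h14 : X 0 0 = projX (X 0 0) := by
      have := norm_le_zero_iff.mp h13
      exact sub_eq_zero.mp this
    rw [h14, hdw0] at hMpos
    linarith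
  · push_neg at hκhalf
    have he1 : (2.7:ℝ) < Real.exp 1 := by
      have := Real.exp_one_gt_d9
      linarith
    have hKc1 : 1 ≤ Kc := by
      by_contra h
      push_neg at h
      have hKc0 : Kc = 0 := by omega
      rw [hKc0] at hKc
      push_cast at hKc
      nlinarith
    -- membership of restart points
    have hX0mem : ∀ j, X j 0 ∈ Kstar := by
      intro j
      induction j with
      | zero => exact hX00
      | succ j ih =>
        rw [hrestart j, hXrec j Kc hKc1]
        exact hT_mem _
    have hXKcmem : ∀ j, X j Kc ∈ Kstar := by
      intro j
      rw [hXrec j Kc hKc1]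
      exact hT_mem _
    -- one FISTA run
    have fista : ∀ (j : ℕ) (w : EuclideanSpace ℝ (Fin p)), w ∈ Kstar →
        (∀ z ∈ Kstar, d z ≤ d w) →
        (∀ k, 1 ≤ k → θ k^2 * (d w - d (X j k))
            + Ld/2 * ‖θ k • X j k - (θ k - 1) • X j (k-1) - w‖^2
          ≤ Ld/2 * ‖X j 0 - w‖^2)
        ∧ ∀ k, ‖X j k - w‖ ≤ ‖X j 0 - w‖ := by
      intro j w hw hmaxw
      exact fista_run (gr := fun z => -(G (uu z)) - g) hLdpos hprojKs key'
        hθ1 hθge hθsq (hYinit j) (fun k hk => hXrec j k hk) (fun k hk => hYrec j k hk)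
        hw hmaxw
    -- restart invariant
    have Inv : ∀ j : ℕ, fstar - d (X j 0) ≤ Real.exp (-2*(j:ℝ)) * (fstar - d (X 0 0))
        ∧ ‖X j 0 - xstar‖ ≤ Rd := by
      intro j
      induction j with
      | zero =>
        constructor
        · norm_num
        · rw [hRd]
      | succ j ih =>
        obtain ⟨ih1, ih2⟩ := ih
        have hle1 : Real.exp (-2*(j:ℝ)) ≤ 1 := by
          rw [show (1:ℝ) = Real.exp 0 by rw [Real.exp_zero]]
          apply Real.exp_le_exp.mpr
          have : (0:ℝ) ≤ (j:ℝ) := Nat.cast_nonneg j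
          linarith
        have hgapj : fstar - d (X j 0) ≤ fstar - d (X 0 0) := by
          have h := mul_le_mul_of_nonneg_right hle1 hMpos.le
          rw [one_mul] at h
          linarith
        have hwjX : projX (X j 0) ∈ Xstar := (hprojX _).1
        have hwjK := hXsub hwjX
        have hrun := fista j (projX (X j 0)) hwjK (hmaxX _ hwjX)
        have hrate := (hrun.1) Kc hKc1
        have hdwj : d (projX (X j 0)) = fstar := hXd _ hwjX
        rw [hdwj] at hrate
        have h0 : θ Kc^2 * (fstar - d (X j Kc)) ≤ Ld/2 * ‖X j 0 - projX (X j 0)‖^2 := by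
          have hnn : 0 ≤ Ld/2 * ‖θ Kc • X j Kc - (θ Kc - 1) • X j (Kc-1) - projX (X j 0)‖^2 := by
            positivity
          linarith
        have hEBj := hEB (X j 0) (hX0mem j) hgapj
        have hgmj := hgm (X j 0) (hX0mem j)
        have hθKc := hθlb Kc hKc1
        have hθKc1 : 1 ≤ θ Kc := hθge Kc hKc1
        have hgapKc : 0 ≤ fstar - d (X j Kc) := by
          have := hwd (X j Kc) (hXKcmem j)
          linarith
        have hgapj0 : 0 ≤ fstar - d (X j 0) := by
          have := hwd (X j 0) (hX0mem j)
          linarith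
        -- chain
        have s4 : ‖X j 0 - projX (X j 0)‖^2
            ≤ (κ * ‖projKs (X j 0 + (1/Ld) • (-(G (uu (X j 0))) - g)) - X j 0‖)^2 :=
          pow_le_pow_left₀ (norm_nonneg _) hEBj 2
        have s5 : Ld/2 * ‖X j 0 - projX (X j 0)‖^2
            ≤ κ^2 * (Ld/2 * ‖projKs (X j 0 + (1/Ld) • (-(G (uu (X j 0))) - g)) - X j 0‖^2) := by
          nlinarith [s4, hLdpos]
        have s6 : θ Kc^2 * (fstar - d (X j Kc)) ≤ κ^2 * (fstar - d (X j 0)) := by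
          have h := mul_le_mul_of_nonneg_left hgmj (sq_nonneg κ)
          linarith
        have s7 : (Real.exp 1 * κ)^2 * (fstar - d (X j Kc))
            ≤ θ Kc^2 * (fstar - d (X j Kc)) := by
          apply mul_le_mul_of_nonneg_right _ hgapKc
          apply pow_le_pow_left₀ (by positivity)
          linarith
        have s9 : Real.exp 1^2 * (fstar - d (X j Kc)) ≤ fstar - d (X j 0) := by
          have hκ2 : (0:ℝ) < κ^2 := by positivity
          have hs : κ^2 * (Real.exp 1^2 * (fstar - d (X j Kc))) ≤ κ^2 * (fstar - d (X j 0)) := by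
            nlinarith [s7, s6]
          exact le_of_mul_le_mul_left hs hκ2
        have hee : Real.exp (-2) * Real.exp 1^2 = 1 := by
          rw [sq, ← Real.exp_add, ← Real.exp_add]
          norm_num
        have s10 : fstar - d (X j Kc) ≤ Real.exp (-2) * (fstar - d (X j 0)) := by
          have heq : fstar - d (X j Kc)
              = Real.exp (-2) * (Real.exp 1^2 * (fstar - d (X j Kc))) := by
            rw [← mul_assoc, hee, one_mul]
          rw [heq]
          exact mul_le_mul_of_nonneg_left s9 (Real.exp_pos _).le
        constructor
        · have h1 : fstar - d (X (j+1) 0) = fstar - d (X j Kc) := by rw [hrestart j]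
          have h2 : Real.exp (-2) * (fstar - d (X j 0))
              ≤ Real.exp (-2) * (Real.exp (-2*(j:ℝ)) * (fstar - d (X 0 0))) :=
            mul_le_mul_of_nonneg_left ih1 (Real.exp_pos _).le
          have h3 : Real.exp (-2) * (Real.exp (-2*(j:ℝ)) * (fstar - d (X 0 0)))
              = Real.exp (-2*((j:ℝ)+1)) * (fstar - d (X 0 0)) := by
            rw [← mul_assoc, ← Real.exp_add]
            congr 2
            ring
          have h4 : (-2*(((j+1):ℕ):ℝ)) = -2*((j:ℝ)+1) := by push_cast; ring
          rw [h1, h4]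
          rw [← h3]
          linarith
        · have hrun2 := fista j xstar (hXsub hxstar) (hmaxX _ hxstar)
          have h5 := hrun2.2 Kc
          rw [hrestart j]
          linarith
    -- final bounds
    intro q
    obtain ⟨hq1, hq2⟩ := Inv q
    have hexp2 : (Real.exp (-(q:ℝ)))^2 = Real.exp (-2*(q:ℝ)) := by
      rw [sq, ← Real.exp_add]
      congr 1
      ring
    have hgapq : fstar - d (X q 0) ≤ Real.exp (-2*(q:ℝ)) * (Ld * Rd^2/2) := by
      have h := mul_le_mul_of_nonneg_left hinit (Real.exp_pos (-2*(q:ℝ))).le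
      linarith
    have hscq := hsc2 (X q 0) (hX0mem q)
    -- bound (1)
    have hvs : ‖uu (X q 0) - ustar‖^2 ≤ Real.exp (-2*(q:ℝ)) * (Ld * Rd^2/σf) := by
      have h1 : σf/2 * ‖uu (X q 0) - ustar‖^2 ≤ Real.exp (-2*(q:ℝ)) * (Ld * Rd^2/2) :=
        le_trans hscq hgapq
      have heq : ‖uu (X q 0) - ustar‖^2 = 2/σf * (σf/2 * ‖uu (X q 0) - ustar‖^2) := by
        field_simp
      rw [heq]
      have h2 : 2/σf * (σf/2 * ‖uu (X q 0) - ustar‖^2)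
          ≤ 2/σf * (Real.exp (-2*(q:ℝ)) * (Ld * Rd^2/2)) :=
        mul_le_mul_of_nonneg_left h1 (by positivity)
      have h3 : 2/σf * (Real.exp (-2*(q:ℝ)) * (Ld * Rd^2/2))
          = Real.exp (-2*(q:ℝ)) * (Ld * Rd^2/σf) := by
        field_simp
      linarith
    have hnn1 : 0 ≤ Ld * Rd^2/σf := by positivity
    have goal1 : ‖uu (X q 0) - ustar‖ ≤ Real.exp (-(q:ℝ)) * Real.sqrt (Ld * Rd^2/σf) := by
      have hrhs : (Real.exp (-(q:ℝ)) * Real.sqrt (Ld * Rd^2/σf))^2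
          = Real.exp (-2*(q:ℝ)) * (Ld * Rd^2/σf) := by
        rw [mul_pow, Real.sq_sqrt hnn1, hexp2]
      exact (abs_le_of_sq_le_sq' (by rw [hrhs]; exact hvs) (by positivity)).2
    have hGRd : ‖G‖ * Real.sqrt (Ld * Rd^2/σf) = Ld * Rd := by
      have h1 : Ld * Rd^2/σf = (‖G‖ * Rd/σf)^2 := by
        rw [hLd]; field_simp
      rw [h1, Real.sqrt_sq (by positivity), hLd]
      field_simp
    have hGv : ‖G (uu (X q 0)) - G ustar‖ ≤ Ld * Rd * Real.exp (-(q:ℝ)) := by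
      rw [← map_sub]
      calc ‖G (uu (X q 0) - ustar)‖ ≤ ‖G‖ * ‖uu (X q 0) - ustar‖ := G.le_opNorm _
        _ ≤ ‖G‖ * (Real.exp (-(q:ℝ)) * Real.sqrt (Ld * Rd^2/σf)) :=
            mul_le_mul_of_nonneg_left goal1 (norm_nonneg _)
        _ = Ld * Rd * Real.exp (-(q:ℝ)) := by
            rw [show ‖G‖ * (Real.exp (-(q:ℝ)) * Real.sqrt (Ld * Rd^2/σf))
              = ‖G‖ * Real.sqrt (Ld * Rd^2/σf) * Real.exp (-(q:ℝ)) by ring, hGRd]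
    refine ⟨goal1, ?_, ?_⟩
    · -- bound (2)
      calc Metric.infDist (G (uu (X q 0)) + g) K
          ≤ dist (G (uu (X q 0)) + g) (G ustar + g) :=
            Metric.infDist_le_dist_of_mem hustar.2.1
        _ = ‖G (uu (X q 0)) - G ustar‖ := by
            rw [dist_eq_norm]
            congr 1
            abel
        _ ≤ Ld * Rd * Real.exp (-(q:ℝ)) := hGv
    · -- bound (3)
      have hxqnorm : ‖X q 0‖ ≤ ‖X 0 0‖ + 2*Rd := by
        have h1 : ‖xstar‖ ≤ ‖X 0 0‖ + Rd := by
          have h1a : ‖xstar‖ = ‖X 0 0 - (X 0 0 - xstar)‖ := by congr 1; abel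
          rw [h1a, hRd]
          exact norm_sub_le _ _
        have h2 : ‖X q 0‖ = ‖xstar + (X q 0 - xstar)‖ := by congr 1; abel
        rw [h2]
        calc ‖xstar + (X q 0 - xstar)‖ ≤ ‖xstar‖ + ‖X q 0 - xstar‖ := norm_add_le _ _
          _ ≤ ‖X 0 0‖ + 2*Rd := by linarith
      have hdxq : d (X q 0) = f (uu (X q 0)) - ⟪X q 0, G (uu (X q 0)) + g⟫ := by
        rw [hd, hLag]
        have hv : -(G (uu (X q 0))) - g = -(G (uu (X q 0)) + g) := by abel
        rw [hv, inner_neg_right]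
        ring
      have hsplit : ⟪X q 0, G (uu (X q 0)) + g⟫
          = ⟪X q 0, G (uu (X q 0)) - G ustar⟫ + ⟪X q 0, G ustar + g⟫ := by
        rw [← inner_add_right]
        congr 1
        abel
      have hdub_q := hdub (X q 0)
      have hiub : ⟪X q 0, G (uu (X q 0)) - G ustar⟫
          ≤ ‖X q 0‖ * ‖G (uu (X q 0)) - G ustar‖ := real_inner_le_norm _ _
      have hC0 : 0 ≤ Ld * Rd * Real.exp (-(q:ℝ)) := by positivity
      have hup : f (uu (X q 0)) - fstar ≤ (‖X 0 0‖ + 2*Rd) * (Ld * Rd * Real.exp (-(q:ℝ))) := by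
        have h1 : f (uu (X q 0)) - fstar ≤ ⟪X q 0, G (uu (X q 0)) - G ustar⟫ := by
          linarith [hdxq, hsplit, hdub_q]
        have hb : (0:ℝ) ≤ ‖X 0 0‖ + 2*Rd :=
          add_nonneg (norm_nonneg _) (mul_nonneg (by norm_num) hRd0)
        have h2 : ‖X q 0‖ * ‖G (uu (X q 0)) - G ustar‖
            ≤ (‖X 0 0‖ + 2*Rd) * (Ld * Rd * Real.exp (-(q:ℝ))) :=
          mul_le_mul hxqnorm hGv (norm_nonneg _) hb
        exact le_trans h1 (le_trans hiub h2)
      -- lower bound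
      have hdxs : d xstar = fstar := hXd _ hxstar
      have hlow1 : d xstar ≤ Lag (uu (X q 0)) xstar := by
        rw [hd]
        exact (huu xstar).2 _ (huu (X q 0)).1
      have hlag2 : Lag (uu (X q 0)) xstar
          = f (uu (X q 0)) - ⟪xstar, G (uu (X q 0)) + g⟫ := by
        rw [hLag]
        have hv : -(G (uu (X q 0))) - g = -(G (uu (X q 0)) + g) := by abel
        rw [hv, inner_neg_right]
        ring
      have hsplit2 : ⟪xstar, G (uu (X q 0)) + g⟫
          = ⟪xstar, G (uu (X q 0)) - G ustar⟫ + ⟪xstar, G ustar + g⟫ := by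
        rw [← inner_add_right]
        congr 1
        abel
      have hilb : -(‖xstar‖ * ‖G (uu (X q 0)) - G ustar‖)
          ≤ ⟪xstar, G (uu (X q 0)) - G ustar⟫ := by
        have h := real_inner_le_norm (-xstar) (G (uu (X q 0)) - G ustar)
        rw [inner_neg_left, norm_neg] at h
        exact neg_le.mpr h
      have hks : 0 ≤ ⟪xstar, G ustar + g⟫ := hKsInner _ (hXsub hxstar)
      have hxstarnorm : ‖xstar‖ ≤ ‖X 0 0‖ + Rd := by
        have h1a : ‖xstar‖ = ‖X 0 0 - (X 0 0 - xstar)‖ := by congr 1; abel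
        rw [h1a, hRd]
        exact norm_sub_le _ _
      have hlow : fstar - f (uu (X q 0))
          ≤ (‖X 0 0‖ + 2*Rd) * (Ld * Rd * Real.exp (-(q:ℝ))) := by
        have h1 : fstar - f (uu (X q 0)) ≤ ‖xstar‖ * ‖G (uu (X q 0)) - G ustar‖ := by
          linarith [hlow1, hlag2, hdxs, hsplit2, hilb, hks]
        have h2 : ‖xstar‖ * ‖G (uu (X q 0)) - G ustar‖
            ≤ (‖X 0 0‖ + 2*Rd) * (Ld * Rd * Real.exp (-(q:ℝ))) := by
          have hb : (0:ℝ) ≤ ‖X 0 0‖ + 2*Rd :=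
            add_nonneg (norm_nonneg _) (mul_nonneg (by norm_num) hRd0)
          exact mul_le_mul (by linarith [hxstarnorm, hRd0]) hGv (norm_nonneg _) hb
        linarith
      have hfin : Ld * Rd * (2*Rd + ‖X 0 0‖) * Real.exp (-(q:ℝ))
          = (‖X 0 0‖ + 2*Rd) * (Ld * Rd * Real.exp (-(q:ℝ))) := by ring
      rw [abs_le]
      constructor
      · rw [hfin]; linarith
      · rw [hfin]; linarith
end

section
/- For the linearly constrained problem (K = {0}, so the dual is unconstrained), after 2k iterations of Algorithm (DG) with constant step size 1/L_d, the last primal iterate satisfies improved O(1/k) bounds: for all k ≥ 1, ‖G u^{2k} + g‖ ≤ 3 L_d R_d / k and |f(u^{2k}) − f*| ≤ (2 R_d + ‖x^0‖) · 3 L_d R_d / k. -/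
open scoped RealInnerProductSpace

set_option maxHeartbeats 4000000

/-- Descent lemma for a "concave function with Lipschitz supergradient", proved
without differentiability via a partition argument. -/
theorem descent_lemma {E : Type*} [NormedAddCommGroup E] [InnerProductSpace ℝ E]
    (d : E → ℝ) (φ : E → E) (L : ℝ) (hL : 0 < L)
    (hsupp : ∀ x y, d y ≤ d x + ⟪φ x, y - x⟫)
    (hlip : ∀ x y, ‖φ x - φ y‖ ≤ L * ‖x - y‖) (x v : E) :
    d x + ⟪φ x, v⟫ - L / 2 * ‖v‖ ^ 2 ≤ d (x + v) := by
  have key : ∀ N : ℕ, 0 < N → d x + ⟪φ x, v⟫ - L * ‖v‖ ^ 2 * ((N + 1) / (2 * N))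
      ≤ d (x + v) := by
    intro N hN
    have hN' : (0 : ℝ) < N := by exact_mod_cast hN
    have main : ∀ m : ℕ, m ≤ N →
        d x + ((m : ℝ) / N) * ⟪φ x, v⟫ - L * ‖v‖ ^ 2 / (N : ℝ) ^ 2 * (m * (m + 1) / 2)
          ≤ d (x + ((m : ℝ) / N) • v) := by
      intro m hm
      induction m with
      | zero => simp
      | succ m ih =>
        have hm' : m ≤ N := Nat.le_of_succ_le hm
        have ih' := ih hm'
        set z : E := x + ((m : ℝ) / N) • v with hz
        set z' : E := x + (((m : ℝ) + 1) / N) • v with hz'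
        have hzz' : z' = z + (1 / (N : ℝ)) • v := by
          rw [hz, hz', add_assoc, ← add_smul]
          ring_nf
        -- step inequality
        have h1 : d z' ≥ d z + (1 / (N : ℝ)) * ⟪φ z', v⟫ := by
          have := hsupp z' z
          have hsub : z - z' = -((1 / (N : ℝ)) • v) := by
            rw [hzz']; abel
          rw [hsub, inner_neg_right, real_inner_smul_right] at this
          linarith
        -- gradient deviation bound
        have h2 : ⟪φ x, v⟫ - L * (((m : ℝ) + 1) / N) * ‖v‖ ^ 2 ≤ ⟪φ z', v⟫ := by
          have ha : ⟪φ x - φ z', v⟫ ≤ ‖φ x - φ z'‖ * ‖v‖ := real_inner_le_norm _ _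
          have hb : ‖φ x - φ z'‖ ≤ L * ‖x - z'‖ := hlip x z'
          have hc : ‖x - z'‖ = (((m : ℝ) + 1) / N) * ‖v‖ := by
            have : x - z' = -((((m : ℝ) + 1) / N) • v) := by rw [hz']; abel
            rw [this, norm_neg, norm_smul, Real.norm_eq_abs, abs_of_nonneg]
            positivity
          have hd : ⟪φ x - φ z', v⟫ = ⟪φ x, v⟫ - ⟪φ z', v⟫ := inner_sub_left _ _ _
          have hv : (0:ℝ) ≤ ‖v‖ := norm_nonneg v
          rw [hc] at hb
          nlinarith [mul_le_mul_of_nonneg_right hb hv]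
        have hcast : ((m + 1 : ℕ) : ℝ) = (m : ℝ) + 1 := by push_cast; ring
        rw [hcast]
        calc d x + (((m : ℝ) + 1) / N) * ⟪φ x, v⟫
              - L * ‖v‖ ^ 2 / (N : ℝ) ^ 2 * (((m : ℝ) + 1) * (((m : ℝ) + 1) + 1) / 2)
            ≤ d z + (1 / (N : ℝ)) * (⟪φ x, v⟫ - L * (((m : ℝ) + 1) / N) * ‖v‖ ^ 2) := by
              have hNne : (N : ℝ) ≠ 0 := ne_of_gt hN'
              have e1 : (((m:ℝ)+1)/N) * ⟪φ x, v⟫ = ((m:ℝ)/N) * ⟪φ x, v⟫ + (1/(N:ℝ)) * ⟪φ x, v⟫ := by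
                rw [← add_mul, ← add_div]
              have e2 : L * ‖v‖ ^ 2 / (N:ℝ)^2 * (((m:ℝ)+1) * (((m:ℝ)+1)+1) / 2)
                  = L * ‖v‖ ^ 2 / (N:ℝ)^2 * ((m:ℝ) * ((m:ℝ)+1)/2)
                    + (1/(N:ℝ)) * (L * (((m:ℝ)+1)/N) * ‖v‖^2) := by
                field_simp; ring
              linarith [ih']
          _ ≤ d z + (1 / (N : ℝ)) * ⟪φ z', v⟫ := by
              have h2' := h2
              have : (0:ℝ) < 1 / (N : ℝ) := by positivity
              nlinarith
          _ ≤ d z' := by linarith [h1]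
    have := main N le_rfl
    have hNne : (N : ℝ) ≠ 0 := ne_of_gt hN'
    rw [div_self hNne, one_smul, one_mul] at this
    calc d x + ⟪φ x, v⟫ - L * ‖v‖ ^ 2 * ((N + 1) / (2 * N))
        = d x + ⟪φ x, v⟫ - L * ‖v‖ ^ 2 / (N : ℝ) ^ 2 * ((N : ℝ) * ((N : ℝ) + 1) / 2) := by
          field_simp
      _ ≤ d (x + v) := this
  by_contra hcon
  push_neg at hcon
  set T : ℝ := d x + ⟪φ x, v⟫ - L / 2 * ‖v‖ ^ 2 - d (x + v) with hT
  have hTpos : 0 < T := by simp only [hT]; linarith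
  obtain ⟨N, hNgt⟩ := exists_nat_gt (L * ‖v‖ ^ 2 / (2 * T))
  have hN0 : 0 < N := by
    by_contra h
    push_neg at h
    interval_cases N
    · have : (0:ℝ) ≤ L * ‖v‖ ^ 2 / (2 * T) := by positivity
      simp at hNgt
      linarith
  have hkey := key N hN0
  have hN' : (0 : ℝ) < N := by exact_mod_cast hN0
  -- L‖v‖² ((N+1)/(2N)) = L/2 ‖v‖² + L‖v‖²/(2N)
  have hsplit : L * ‖v‖ ^ 2 * (((N:ℝ) + 1) / (2 * N)) = L / 2 * ‖v‖ ^ 2 + L * ‖v‖ ^ 2 / (2 * N) := by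
    field_simp
  rw [hsplit] at hkey
  -- so T ≤ L‖v‖²/(2N) < T
  have : L * ‖v‖ ^ 2 / (2 * T) < N := hNgt
  have hlt : L * ‖v‖ ^ 2 / (2 * (N:ℝ)) < T := by
    rw [div_lt_iff₀ (by positivity)]
    rw [div_lt_iff₀ (by positivity)] at this
    nlinarith
  linarith [hkey]

theorem cocoercive {E : Type*} [NormedAddCommGroup E] [InnerProductSpace ℝ E]
    (d : E → ℝ) (φ : E → E) (L : ℝ) (hL : 0 < L)
    (hsupp : ∀ x y, d y ≤ d x + ⟪φ x, y - x⟫)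
    (hlip : ∀ x y, ‖φ x - φ y‖ ≤ L * ‖x - y‖) (x y : E) :
    ⟪φ x - φ y, x - y⟫ ≤ -(1 / L) * ‖φ x - φ y‖ ^ 2 := by
  -- one-sided key inequality
  have key : ∀ a b : E, d a - ⟪φ a, a⟫ ≥ d b - ⟪φ a, b⟫ + 1 / (2 * L) * ‖φ b - φ a‖ ^ 2 := by
    intro a b
    set da : E → ℝ := fun z => d z - ⟪φ a, z⟫ with hda
    set φa : E → E := fun z => φ z - φ a with hφa
    have hsupp' : ∀ u w, da w ≤ da u + ⟪φa u, w - u⟫ := by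
      intro u w
      have := hsupp u w
      simp only [hda, hφa, inner_sub_left]
      have hsplit : ⟪φ a, w - u⟫ = ⟪φ a, w⟫ - ⟪φ a, u⟫ := inner_sub_right _ _ _
      linarith
    have hlip' : ∀ u w, ‖φa u - φa w‖ ≤ L * ‖u - w‖ := by
      intro u w
      simp only [hφa, sub_sub_sub_cancel_right]
      exact hlip u w
    -- a maximizes da
    have hmax : ∀ z, da z ≤ da a := by
      intro z
      have := hsupp' a z
      simp only [hφa, sub_self] at this
      simpa using this
    have hdesc := descent_lemma da φa L hL hsupp' hlip' b ((1 / L) • φa b)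
    have h1 : ⟪φa b, (1 / L) • φa b⟫ = (1 / L) * ‖φa b‖ ^ 2 := by
      rw [real_inner_smul_right, real_inner_self_eq_norm_sq]
    have h2 : ‖(1 / L) • φa b‖ ^ 2 = (1 / L) ^ 2 * ‖φa b‖ ^ 2 := by
      rw [norm_smul, Real.norm_eq_abs, mul_pow, sq_abs]
    have h3 := hmax (b + (1 / L) • φa b)
    have harith : (1 / L) * ‖φa b‖ ^ 2 - L / 2 * ((1 / L) ^ 2 * ‖φa b‖ ^ 2)
        = 1 / (2 * L) * ‖φa b‖ ^ 2 := by field_simp; ring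
    have : da b + 1 / (2 * L) * ‖φa b‖ ^ 2 ≤ da a := by
      rw [h1, h2] at hdesc
      rw [← harith]; linarith [hdesc, h3]
    simpa only [hda, hφa] using this
  have k1 := key x y
  have k2 := key y x
  have e1 : ‖φ y - φ x‖ = ‖φ x - φ y‖ := norm_sub_rev _ _
  rw [e1] at k1
  have hinner : ⟪φ x - φ y, x - y⟫
      = (⟪φ x, x⟫ - ⟪φ x, y⟫) + (⟪φ y, y⟫ - ⟪φ y, x⟫) := by
    rw [inner_sub_left, inner_sub_right, inner_sub_right]
    ring
  have hq : 0 ≤ ‖φ x - φ y‖ ^ 2 := sq_nonneg _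
  have hL2 : 1 / (2 * L) + 1 / (2 * L) = 1 / L := by
    rw [← add_div]
    rw [div_eq_div_iff (by positivity) (ne_of_gt hL)]
    ring
  nlinarith [k1, k2]

lemma le_of_sq_le_sq' (a b : ℝ) (ha : 0 ≤ a) (hb : 0 ≤ b) (h : a ^ 2 ≤ b ^ 2) : a ≤ b := by
  nlinarith [sq_nonneg (a - b), sq_nonneg (a + b)]

theorem stmt_18 {n p : ℕ}
    (f : EuclideanSpace ℝ (Fin n) → ℝ) (σf : ℝ) (hσf : 0 < σf)
    (hfc : Continuous f) (hfsc : StrongConvexOn Set.univ σf f)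
    (U : Set (EuclideanSpace ℝ (Fin n))) (hUne : U.Nonempty) (hUcl : IsClosed U) (hUcv : Convex ℝ U)
    (G : EuclideanSpace ℝ (Fin n) →L[ℝ] EuclideanSpace ℝ (Fin p)) (hG : G ≠ 0) (g : EuclideanSpace ℝ (Fin p))
    (Lag : EuclideanSpace ℝ (Fin n) → EuclideanSpace ℝ (Fin p) → ℝ)
    (hLag : ∀ u x, Lag u x = f u + ⟪x, -(G u) - g⟫)
    (uu : EuclideanSpace ℝ (Fin p) → EuclideanSpace ℝ (Fin n))
    (huu : ∀ x : EuclideanSpace ℝ (Fin p), uu x ∈ U ∧ ∀ u ∈ U, Lag (uu x) x ≤ Lag u x)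
    (d : EuclideanSpace ℝ (Fin p) → ℝ) (hd : ∀ x, d x = Lag (uu x) x)
    (ustar : EuclideanSpace ℝ (Fin n))
    (hustar : ustar ∈ U ∧ G ustar + g = 0 ∧ ∀ u ∈ U, G u + g = 0 → f ustar ≤ f u)
    (fstar : ℝ) (hfstar : fstar = f ustar)
    (Xstar : Set (EuclideanSpace ℝ (Fin p))) (hXstar : Xstar = {x : EuclideanSpace ℝ (Fin p) | d x = fstar})
    (hXne : Xstar.Nonempty)
    (Ld : ℝ) (hLd : Ld = ‖G‖ ^ 2 / σf)
    (x : ℕ → EuclideanSpace ℝ (Fin p))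
    (hxrec : ∀ k, x (k + 1) = x k + (1 / Ld) • (-(G (uu (x k))) - g))
    (xstar : EuclideanSpace ℝ (Fin p)) (hxstar : xstar ∈ Xstar)
    (hxstarmin : ∀ z ∈ Xstar, ‖x 0 - xstar‖ ≤ ‖x 0 - z‖)
    (Rd : ℝ) (hRd : Rd = ‖x 0 - xstar‖)
 :
    ∀ k : ℕ, 1 ≤ k →
      ‖G (uu (x (2 * k))) + g‖ ≤ 3 * Ld * Rd / (k : ℝ) ∧
      |f (uu (x (2 * k))) - fstar| ≤
        (2 * Rd + ‖x 0‖) * (3 * Ld * Rd / (k : ℝ)) := by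
  classical
  -- basic positivity
  have hGnorm : (0:ℝ) < ‖G‖ := by
    rcases (norm_nonneg G).lt_or_eq with h | h
    · exact h
    · exact absurd (norm_eq_zero.mp h.symm) hG
  have hLpos : 0 < Ld := by rw [hLd]; positivity
  have Rnn : 0 ≤ Rd := hRd ▸ norm_nonneg _
  set Φ : EuclideanSpace ℝ (Fin p) → EuclideanSpace ℝ (Fin p) :=
    fun y => -(G (uu y)) - g with hΦ
  -- supergradient inequality
  have hsupp : ∀ a b, d b ≤ d a + ⟪Φ a, b - a⟫ := by
    intro a b
    have h1 : d b ≤ Lag (uu a) b := by rw [hd]; exact (huu b).2 (uu a) (huu a).1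
    have h2 : Lag (uu a) b = f (uu a) + ⟪b, Φ a⟫ := by rw [hLag]
    have h3 : d a = f (uu a) + ⟪a, Φ a⟫ := by rw [hd, hLag]
    have h4 : ⟪Φ a, b - a⟫ = ⟪b, Φ a⟫ - ⟪a, Φ a⟫ := by
      rw [real_inner_comm, inner_sub_left]
    linarith
  -- strong minimality of uu y
  have hstrong : ∀ (y : EuclideanSpace ℝ (Fin p)) (u : EuclideanSpace ℝ (Fin n)), u ∈ U →
      Lag (uu y) y + σf / 2 * ‖u - uu y‖ ^ 2 ≤ Lag u y := by
    intro y u hu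
    have hu1U : uu y ∈ U := (huu y).1
    have hmin := (huu y).2
    have step : ∀ t : ℝ, 0 < t → t ≤ 1 →
        Lag (uu y) y + (1 - t) * (σf / 2 * ‖u - uu y‖ ^ 2) ≤ Lag u y := by
      intro t ht0 ht1
      have hcomb := hfsc.2 (Set.mem_univ u) (Set.mem_univ (uu y)) ht0.le
        (by linarith : (0:ℝ) ≤ 1 - t) (by ring)
      simp only [smul_eq_mul] at hcomb
      have hmem : t • u + (1 - t) • uu y ∈ U := hUcv hu hu1U ht0.le (by linarith) (by ring)
      have hlin : ⟪y, -(G (t • u + (1 - t) • uu y)) - g⟫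
          = t * ⟪y, -(G u) - g⟫ + (1 - t) * ⟪y, -(G (uu y)) - g⟫ := by
        have hGc : G (t • u + (1 - t) • uu y) = t • G u + (1 - t) • G (uu y) := by
          rw [map_add, map_smul, map_smul]
        have hvec : -(t • G u + (1 - t) • G (uu y)) - g
            = t • (-(G u) - g) + (1 - t) • (-(G (uu y)) - g) := by
          module
        rw [hGc, hvec, inner_add_right, real_inner_smul_right, real_inner_smul_right]
      have hL1 : Lag (t • u + (1 - t) • uu y) y
          ≤ t * Lag u y + (1 - t) * Lag (uu y) y - t * (1 - t) * (σf / 2 * ‖u - uu y‖ ^ 2) := by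
        rw [hLag, hLag, hLag, hlin]
        nlinarith [hcomb]
      have hL2 : Lag (uu y) y ≤ Lag (t • u + (1 - t) • uu y) y := hmin _ hmem
      nlinarith [hL1, hL2, ht0]
    by_contra hcon
    push_neg at hcon
    set c : ℝ := σf / 2 * ‖u - uu y‖ ^ 2 with hc
    set D : ℝ := Lag u y - Lag (uu y) y with hD
    have hgap : 0 < c - D := by simp only [hc, hD]; linarith
    have hcnn : 0 ≤ c := by positivity
    clear_value c D
    obtain ⟨N, hN⟩ := exists_nat_gt (c / (c - D))
    have hN1 : (0:ℝ) < (N:ℝ) + 1 := by positivity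
    have hstept := step (1 / ((N:ℝ) + 1)) (by positivity) (by
      rw [div_le_one hN1]; linarith)
    have h6 : c / ((N:ℝ)+1) < c - D := by
      rw [div_lt_iff₀ hN1]
      rw [div_lt_iff₀ hgap] at hN
      nlinarith
    have h7 : D ≥ c - c / ((N:ℝ)+1) := by
      have he : (1 - 1 / ((N:ℝ)+1)) * c = c - c / ((N:ℝ)+1) := by
        field_simp
      simp only [hD]
      linarith [hstept, he]
    linarith
  -- Lipschitzness of Φ
  have hlip : ∀ a b, ‖Φ a - Φ b‖ ≤ Ld * ‖a - b‖ := by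
    intro a b
    have einner : ∀ (w : EuclideanSpace ℝ (Fin p)) (z : EuclideanSpace ℝ (Fin n)),
        ⟪w, -(G z) - g⟫ = -⟪w, G z⟫ - ⟪w, g⟫ := by
      intro w z; rw [inner_sub_right, inner_neg_right]
    have h1 := hstrong a (uu b) (huu b).1
    have h2 := hstrong b (uu a) (huu a).1
    rw [hLag, hLag, einner, einner] at h1 h2
    have hsymm : ‖uu a - uu b‖ = ‖uu b - uu a‖ := norm_sub_rev _ _
    rw [← hsymm] at h1
    have hsum : σf * ‖uu a - uu b‖ ^ 2 ≤ ⟪a - b, G (uu a) - G (uu b)⟫ := by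
      have e1 : ⟪a - b, G (uu a) - G (uu b)⟫
          = (⟪a, G (uu a)⟫ - ⟪a, G (uu b)⟫) - (⟪b, G (uu a)⟫ - ⟪b, G (uu b)⟫) := by
        rw [inner_sub_left, inner_sub_right, inner_sub_right]
      rw [e1]; linarith
    have hG1 : G (uu a) - G (uu b) = G (uu a - uu b) := by rw [map_sub]
    have hlipuu : ‖uu a - uu b‖ ≤ ‖G‖ / σf * ‖a - b‖ := by
      rcases eq_or_lt_of_le (norm_nonneg (uu a - uu b)) with h0 | h0
      · rw [← h0]; positivity
      · have h3 : ⟪a - b, G (uu a) - G (uu b)⟫ ≤ ‖a - b‖ * ‖G (uu a - uu b)‖ := by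
          rw [hG1]; exact real_inner_le_norm _ _
        have h4 : ‖G (uu a - uu b)‖ ≤ ‖G‖ * ‖uu a - uu b‖ := G.le_opNorm _
        have h5 : σf * ‖uu a - uu b‖ ^ 2 ≤ ‖a - b‖ * (‖G‖ * ‖uu a - uu b‖) := by
          have h6 := mul_le_mul_of_nonneg_left h4 (norm_nonneg (a - b))
          linarith
        rw [div_mul_eq_mul_div, le_div_iff₀ hσf]
        nlinarith [h5, h0]
    have hΦd : Φ a - Φ b = G (uu b - uu a) := by
      simp only [hΦ]
      rw [map_sub]
      abel
    rw [hΦd]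
    calc ‖G (uu b - uu a)‖ ≤ ‖G‖ * ‖uu b - uu a‖ := G.le_opNorm _
      _ ≤ ‖G‖ * (‖G‖ / σf * ‖a - b‖) := by
          rw [← hsymm]
          exact mul_le_mul_of_nonneg_left hlipuu (norm_nonneg G)
      _ = Ld * ‖a - b‖ := by rw [hLd]; ring
  -- weak duality
  have w1 : ∀ y, d y ≤ fstar := by
    intro y
    have h1 : Lag (uu y) y ≤ Lag ustar y := (huu y).2 ustar hustar.1
    have h2 : Lag ustar y = f ustar := by
      rw [hLag]
      have h0 : -(G ustar) - g = 0 := by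
        have h5 : -(G ustar) - g = -(G ustar + g) := by abel
        rw [h5, hustar.2.1, neg_zero]
      rw [h0, inner_zero_right, add_zero]
    rw [hd, hfstar]
    linarith
  have dstar : d xstar = fstar := by
    have := hxstar
    rw [hXstar] at this
    exact this
  have hstep : ∀ k, x (k+1) = x k + (1/Ld) • Φ (x k) := fun k => hxrec k
  -- descent property
  have hdesc : ∀ y, d y + 1/(2*Ld) * ‖Φ y‖^2 ≤ d (y + (1/Ld) • Φ y) := by
    intro y
    have hdl := descent_lemma d Φ Ld hLpos hsupp hlip y ((1/Ld) • Φ y)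
    have h1 : ⟪Φ y, (1/Ld) • Φ y⟫ = (1/Ld) * ‖Φ y‖^2 := by
      rw [real_inner_smul_right, real_inner_self_eq_norm_sq]
    have h2 : ‖(1/Ld) • Φ y‖^2 = (1/Ld)^2 * ‖Φ y‖^2 := by
      rw [norm_smul, mul_pow, Real.norm_eq_abs, sq_abs]
    rw [h1, h2] at hdl
    have harith : (1/Ld) * ‖Φ y‖^2 - Ld/2 * ((1/Ld)^2 * ‖Φ y‖^2) = 1/(2*Ld) * ‖Φ y‖^2 := by
      field_simp; ring
    linarith
  have hgap2 : ∀ y, ‖Φ y‖^2 ≤ 2*Ld*(fstar - d y) := by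
    intro y
    have h1 := hdesc y
    have h2 := w1 (y + (1/Ld) • Φ y)
    have h3 : 1/(2*Ld) * ‖Φ y‖^2 ≤ fstar - d y := by linarith
    have := mul_le_mul_of_nonneg_left h3 (by positivity : (0:ℝ) ≤ 2*Ld)
    have e : (2*Ld) * (1/(2*Ld) * ‖Φ y‖^2) = ‖Φ y‖^2 := by field_simp
    linarith
  have hdmono : ∀ k, d (x k) + 1/(2*Ld) * ‖Φ (x k)‖^2 ≤ d (x (k+1)) := by
    intro k; rw [hstep k]; exact hdesc (x k)
  -- Fejer monotonicity
  have hfej : ∀ k, ‖x k - xstar‖ ≤ Rd := by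
    intro k
    induction k with
    | zero => rw [hRd]
    | succ k ih =>
      have hkey : ‖x (k+1) - xstar‖^2 ≤ ‖x k - xstar‖^2 := by
        have hexp : x (k+1) - xstar = (x k - xstar) + (1/Ld) • Φ (x k) := by
          rw [hstep k]; abel
        rw [hexp, norm_add_sq_real]
        have h1 : ⟪x k - xstar, (1/Ld) • Φ (x k)⟫ = (1/Ld) * ⟪Φ (x k), x k - xstar⟫ := by
          rw [real_inner_smul_right, real_inner_comm]
        have h2 : ‖(1/Ld) • Φ (x k)‖^2 = (1/Ld)^2 * ‖Φ (x k)‖^2 := by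
          rw [norm_smul, mul_pow, Real.norm_eq_abs, sq_abs]
        have h3 : ⟪Φ (x k), x k - xstar⟫ ≤ d (x k) - fstar := by
          have h5 := hsupp (x k) xstar
          have h4 : ⟪Φ (x k), xstar - x k⟫ = -⟪Φ (x k), x k - xstar⟫ := by
            rw [← inner_neg_right]; congr 1; abel
          rw [h4, dstar] at h5
          linarith
        have h5 := hgap2 (x k)
        have h6 : ⟪Φ (x k), x k - xstar⟫ ≤ -((1/Ld)/2) * ‖Φ (x k)‖^2 := by
          have e : -((1/Ld)/2) * ‖Φ (x k)‖^2 = -(1/(2*Ld) * ‖Φ (x k)‖^2) := by ring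
          rw [e]
          have h7 : 1/(2*Ld) * ‖Φ (x k)‖^2 ≤ fstar - d (x k) := by
            have := mul_le_mul_of_nonneg_left h5 (by positivity : (0:ℝ) ≤ 1/(2*Ld))
            have e2 : 1/(2*Ld) * (2*Ld*(fstar - d (x k))) = fstar - d (x k) := by
              field_simp
            linarith
          linarith
        rw [h1, h2]
        nlinarith [mul_le_mul_of_nonneg_left h6 (by positivity : (0:ℝ) ≤ 2*(1/Ld))]
      have := le_of_sq_le_sq' _ _ (norm_nonneg _) (norm_nonneg _)
        (le_trans hkey (by nlinarith [norm_nonneg (x k - xstar), ih]))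
      exact le_trans this ih
  -- gradient norm monotone
  have hcoco := cocoercive d Φ Ld hLpos hsupp hlip
  have hgmono : ∀ k, ‖Φ (x (k+1))‖ ≤ ‖Φ (x k)‖ := by
    intro k
    have hcc := hcoco (x (k+1)) (x k)
    have hxd : x (k+1) - x k = (1/Ld) • Φ (x k) := by rw [hstep k]; abel
    rw [hxd, real_inner_smul_right] at hcc
    have h7 : ⟪Φ (x (k+1)) - Φ (x k), Φ (x k)⟫ ≤ -‖Φ (x (k+1)) - Φ (x k)‖^2 := by
      have hLinv : (0:ℝ) < 1/Ld := by positivity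
      nlinarith [hcc]
    have hexp := norm_add_sq_real (Φ (x k)) (Φ (x (k+1)) - Φ (x k))
    have e : Φ (x k) + (Φ (x (k+1)) - Φ (x k)) = Φ (x (k+1)) := by abel
    rw [e] at hexp
    have hsym : ⟪Φ (x k), Φ (x (k+1)) - Φ (x k)⟫
        = ⟪Φ (x (k+1)) - Φ (x k), Φ (x k)⟫ := real_inner_comm _ _
    apply le_of_sq_le_sq' _ _ (norm_nonneg _) (norm_nonneg _)
    rw [hexp, hsym]
    nlinarith [h7, sq_nonneg ‖Φ (x (k+1)) - Φ (x k)‖]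
  -- gap bounded by gradient times Rd
  have hδg : ∀ k, fstar - d (x k) ≤ ‖Φ (x k)‖ * Rd := by
    intro k
    have h1 := hsupp (x k) xstar
    rw [dstar] at h1
    have h2 : ⟪Φ (x k), xstar - x k⟫ ≤ ‖Φ (x k)‖ * ‖xstar - x k‖ := real_inner_le_norm _ _
    have h3 : ‖xstar - x k‖ = ‖x k - xstar‖ := norm_sub_rev _ _
    have h5 : ‖Φ (x k)‖ * ‖xstar - x k‖ ≤ ‖Φ (x k)‖ * Rd := by
      rw [h3]; exact mul_le_mul_of_nonneg_left (hfej k) (norm_nonneg _)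
    linarith
  have hδnn : ∀ k, 0 ≤ fstar - d (x k) := fun k => by linarith [w1 (x k)]
  -- rate for the dual gap
  have hrate : ∀ k : ℕ, 1 ≤ k → fstar - d (x k) ≤ 2*Ld*Rd^2 / (k:ℝ) := by
    intro k hk
    induction k with
    | zero => omega
    | succ k ih =>
      have base : ∀ j : ℕ, fstar - d (x j) ≤ 2*Ld*Rd^2 → True := fun _ _ => trivial
      rcases Nat.eq_zero_or_pos k with hk0 | hk1
      · -- base case k+1 = 1
        subst hk0
        have h1 := hδg 1
        have h2 := hgap2 (x 1)
        have h3 := hδnn 1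
        have hg1 : (0:ℝ) ≤ ‖Φ (x 1)‖ := norm_nonneg _
        push_cast
        rw [div_one]
        nlinarith [mul_le_mul_of_nonneg_left h1 (by positivity : (0:ℝ) ≤ 2*Ld),
          mul_le_mul_of_nonneg_right h1 hg1, sq_nonneg (‖Φ (x 1)‖ - 2*Ld*Rd)]
      · have ihk := ih hk1
        have hk' : (0:ℝ) < (k:ℝ) := by exact_mod_cast hk1
        set a : ℝ := fstar - d (x (k+1)) with ha
        set b : ℝ := fstar - d (x k) with hb
        have hab : a ≤ b := by
          have := hdmono k
          have h0 : (0:ℝ) ≤ 1/(2*Ld) * ‖Φ (x k)‖^2 := by positivity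
          simp only [ha, hb]
          linarith
        have hann : 0 ≤ a := hδnn (k+1)
        have hbnn : 0 ≤ b := hδnn k
        rcases eq_or_lt_of_le hann with ha0 | ha0
        · rw [← ha0]; positivity
        · -- a > 0, hence b > 0 and Rd > 0
          have hb0 : 0 < b := lt_of_lt_of_le ha0 hab
          have hR0 : 0 < Rd := by
            rcases eq_or_lt_of_le Rnn with h | h
            · exfalso
              have := hδg k
              rw [← h] at this
              simp only [hb] at hb0
              nlinarith
            · exact h
          set C : ℝ := 2*Ld*Rd^2 with hC
          have hC0 : 0 < C := by positivity
          -- key recursion : a * (C + b) ≤ b * C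
          have hbg : b ≤ ‖Φ (x k)‖ * Rd := hδg k
          have hg2 : ‖Φ (x k)‖^2 ≤ 2*Ld*b := hgap2 (x k)
          have hbsq : b^2 ≤ ‖Φ (x k)‖^2 * Rd^2 := by
            nlinarith [hbg, hbnn, norm_nonneg (Φ (x k)), Rnn]
          have hstep2 : a ≤ b - 1/(2*Ld) * ‖Φ (x k)‖^2 := by
            have := hdmono k
            simp only [ha, hb]
            linarith
          have hq : b^2 / C ≤ 1/(2*Ld) * ‖Φ (x k)‖^2 := by
            rw [div_le_iff₀ hC0]
            have e : 1/(2*Ld) * ‖Φ (x k)‖^2 * C = ‖Φ (x k)‖^2 * Rd^2 := by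
              simp only [hC]; field_simp
            rw [e]
            exact hbsq
          have hrec : a ≤ b - b^2 / C := by linarith
          have key1 : a * C + a * b ≤ b * C := by
            have p1 : a * C ≤ (b - b^2/C) * C := mul_le_mul_of_nonneg_right hrec hC0.le
            have e : (b - b^2/C) * C = b * C - b^2 := by field_simp
            rw [e] at p1
            have p2 : a * b ≤ b * b := mul_le_mul_of_nonneg_right hab hbnn
            nlinarith
          have hbk : b * k ≤ C := by
            calc b * k ≤ (C / k) * k := mul_le_mul_of_nonneg_right ihk hk'.le
              _ = C := by field_simp
          have h9 : 0 ≤ b * (C - a * ((k:ℝ)+1)) := by nlinarith [key1, hbk, ha0.le]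
          have h10 : 0 ≤ C - a * ((k:ℝ)+1) := by
            by_contra hcc
            push_neg at hcc
            nlinarith
          push_cast
          rw [le_div_iff₀ (by positivity)]
          linarith
  -- window estimate
  have hwin : ∀ k m : ℕ, d (x k) + (m:ℝ) * (1/(2*Ld)) * ‖Φ (x (k+m))‖^2 ≤ d (x (k+m)) := by
    intro k m
    induction m with
    | zero => simp
    | succ m ih =>
      have h1 := hdmono (k+m)
      have h2 := hgmono (k+m)
      have h3 : ‖Φ (x (k+m+1))‖^2 ≤ ‖Φ (x (k+m))‖^2 := by
        nlinarith [norm_nonneg (Φ (x (k+m+1))), norm_nonneg (Φ (x (k+m)))]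
      have hcoef : (0:ℝ) ≤ ((m:ℝ)+1) * (1/(2*Ld)) := by positivity
      have hadd : k + (m+1) = (k+m) + 1 := by omega
      rw [hadd]
      push_cast
      linarith [ih, h1, mul_le_mul_of_nonneg_left h3 hcoef]
  -- final bounds
  intro k hk
  have hk' : (0:ℝ) < (k:ℝ) := by exact_mod_cast hk
  have h2k := hwin k k
  rw [show k + k = 2*k by ring] at h2k
  have hA : (k:ℝ) * (1/(2*Ld)) * ‖Φ (x (2*k))‖^2 ≤ 2*Ld*Rd^2/(k:ℝ) := by
    have h1 := hrate k hk
    have h2 := w1 (x (2*k))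
    linarith
  have hkne : (k:ℝ) ≠ 0 := ne_of_gt hk'
  have hLne : Ld ≠ 0 := ne_of_gt hLpos
  have hgb : ‖Φ (x (2*k))‖ ≤ 2*Ld*Rd/(k:ℝ) := by
    apply le_of_sq_le_sq' _ _ (norm_nonneg _) (by positivity)
    have hmul := mul_le_mul_of_nonneg_left hA (by positivity : (0:ℝ) ≤ 2*Ld/(k:ℝ))
    have e1 : ∀ Q : ℝ, (2*Ld/(k:ℝ)) * ((k:ℝ) * (1/(2*Ld)) * Q) = Q := by
      clear * - hkne hLne
      intro Q; field_simp
    have e2 : (2*Ld/(k:ℝ)) * (2*Ld*Rd^2/(k:ℝ)) = (2*Ld*Rd/(k:ℝ))^2 := by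
      clear * - hkne hLne
      field_simp
    rw [e1, e2] at hmul
    exact hmul
  have hgb3 : ‖Φ (x (2*k))‖ ≤ 3*Ld*Rd/(k:ℝ) := by
    have h23 : 2*Ld*Rd/(k:ℝ) ≤ 3*Ld*Rd/(k:ℝ) :=
      (div_le_div_iff_of_pos_right hk').mpr (by nlinarith [hLpos, Rnn])
    linarith [hgb]
  have hΦeq : ‖G (uu (x (2*k))) + g‖ = ‖Φ (x (2*k))‖ := by
    have e : Φ (x (2*k)) = -(G (uu (x (2*k))) + g) := by
      simp only [hΦ]; abel
    rw [e, norm_neg]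
  constructor
  · rw [hΦeq]; exact hgb3
  · -- function value bound
    have hdu : d (x (2*k)) = f (uu (x (2*k))) + ⟪x (2*k), Φ (x (2*k))⟫ := by
      rw [hd, hLag]
    have hup : f (uu (x (2*k))) - fstar ≤ ‖x (2*k)‖ * ‖Φ (x (2*k))‖ := by
      have h1 := w1 (x (2*k))
      have h2 : -⟪x (2*k), Φ (x (2*k))⟫ ≤ ‖x (2*k)‖ * ‖Φ (x (2*k))‖ := by
        have h3 := abs_real_inner_le_norm (x (2*k)) (Φ (x (2*k)))
        have h4 := neg_abs_le ⟪x (2*k), Φ (x (2*k))⟫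
        linarith
      linarith
    have hlow : fstar - f (uu (x (2*k))) ≤ ‖xstar‖ * ‖Φ (x (2*k))‖ := by
      have h1 : d xstar ≤ Lag (uu (x (2*k))) xstar := by
        rw [hd]; exact (huu xstar).2 _ (huu (x (2*k))).1
      rw [hLag, dstar] at h1
      have h2 : ⟪xstar, -(G (uu (x (2*k)))) - g⟫ ≤ ‖xstar‖ * ‖Φ (x (2*k))‖ := by
        have := real_inner_le_norm xstar (Φ (x (2*k)))
        simpa only [hΦ] using this
      linarith
    have hxs : ‖xstar‖ ≤ Rd + ‖x 0‖ := by
      have h3 := norm_sub_norm_le xstar (x 0)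
      have h4 : ‖xstar - x 0‖ = ‖x 0 - xstar‖ := norm_sub_rev _ _
      rw [h4, ← hRd] at h3
      linarith
    have hxm : ‖x (2*k)‖ ≤ 2*Rd + ‖x 0‖ := by
      have h1 := hfej (2*k)
      have h4 := norm_sub_norm_le (x (2*k)) xstar
      linarith
    have hgnn : (0:ℝ) ≤ ‖Φ (x (2*k))‖ := norm_nonneg _
    have hfac : (0:ℝ) ≤ 2*Rd + ‖x 0‖ := by positivity
    have habs : |f (uu (x (2*k))) - fstar| ≤ (2*Rd + ‖x 0‖) * ‖Φ (x (2*k))‖ := by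
      rw [abs_le]
      constructor
      · have h5 : ‖xstar‖ * ‖Φ (x (2*k))‖ ≤ (2*Rd + ‖x 0‖) * ‖Φ (x (2*k))‖ :=
          mul_le_mul_of_nonneg_right (by linarith) hgnn
        linarith
      · have h5 : ‖x (2*k)‖ * ‖Φ (x (2*k))‖ ≤ (2*Rd + ‖x 0‖) * ‖Φ (x (2*k))‖ :=
          mul_le_mul_of_nonneg_right hxm hgnn
        linarith
    calc |f (uu (x (2*k))) - fstar| ≤ (2*Rd + ‖x 0‖) * ‖Φ (x (2*k))‖ := habs
      _ ≤ (2*Rd + ‖x 0‖) * (3*Ld*Rd/(k:ℝ)) := mul_le_mul_of_nonneg_left hgb3 hfac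
end
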